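/- Let ℓ : ℝⁿ → ℝ be differentiable, x ∈ ℝⁿ, and suppose the regularity condition ⟨∇ℓ(z), z - x⟩ ≥ (μ/2)‖∇ℓ(z)‖² + (λ/2)‖z - x‖² holds for all z with ‖z - x‖ ≤ ε‖x‖, with μλ < 1. If z₀ satisfies ‖z₀ - x‖ ≤ ε‖x‖, then the iterates z_{t+1} = z_t - μ∇ℓ(z_t) satisfy ‖z_t - x‖ ≤ (1 - μλ)^{t/2} ε ‖x‖ for all t ≥ 0; in particular all iterates remain in the ball and z_t → x. -/

import Mathlib

open Filter

/-- Geometric convergence of fixed-step gradient descent under the local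
regularity condition RC(μ, λ, ε): iterates stay in the ball and converge to `x`. -/
theorem regularity_geometric_convergence {n : ℕ}
    (ℓ : EuclideanSpace ℝ (Fin n) → ℝ) (hℓ : Differentiable ℝ ℓ)
    (x : EuclideanSpace ℝ (Fin n)) (μ lam ε : ℝ)
    (hμ : 0 < μ) (hlam : 0 < lam) (hε0 : 0 < ε) (hε1 : ε < 1)
    (hRC : ∀ z : EuclideanSpace ℝ (Fin n), ‖z - x‖ ≤ ε * ‖x‖ →
      (μ / 2) * ‖gradient ℓ z‖ ^ 2 + (lam / 2) * ‖z - x‖ ^ 2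
        ≤ (inner ℝ (gradient ℓ z) (z - x) : ℝ))
    (hμlam : μ * lam < 1)
    (z : ℕ → EuclideanSpace ℝ (Fin n))
    (h0 : ‖z 0 - x‖ ≤ ε * ‖x‖)
    (hrec : ∀ t : ℕ, z (t + 1) = z t - μ • gradient ℓ (z t)) :
    (∀ t : ℕ, ‖z t - x‖ ≤ (1 - μ * lam) ^ ((t : ℝ) / 2) * (ε * ‖x‖)) ∧
    (∀ t : ℕ, ‖z t - x‖ ≤ ε * ‖x‖) ∧
    Tendsto z atTop (nhds x) := by
  set r : ℝ := 1 - μ * lam with hrdef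
  have hr0 : 0 ≤ r := by nlinarith
  have hr1 : r < 1 := by nlinarith
  have hC : 0 ≤ ε * ‖x‖ := mul_nonneg hε0.le (norm_nonneg _)
  have key : ∀ t, ‖z t - x‖ ≤ ε * ‖x‖ →
      ‖z (t + 1) - x‖ ^ 2 ≤ r * ‖z t - x‖ ^ 2 := by
    intro t hz
    have hq := hRC (z t) hz
    have hzz : z (t + 1) - x = (z t - x) - μ • gradient ℓ (z t) := by
      rw [hrec]; abel
    rw [hzz, norm_sub_sq_real, norm_smul, real_inner_smul_right,
      real_inner_comm]
    have hμabs : ‖μ‖ = μ := by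
      rw [Real.norm_eq_abs, abs_of_pos hμ]
    rw [hμabs]
    nlinarith [sq_nonneg (‖gradient ℓ (z t)‖), sq_nonneg (‖z t - x‖),
      mul_le_mul_of_nonneg_left hq (by positivity : (0:ℝ) ≤ 2 * μ)]
  have hsq : ∀ t : ℕ, ‖z t - x‖ ^ 2 ≤ r ^ t * (ε * ‖x‖) ^ 2 ∧
      ‖z t - x‖ ≤ ε * ‖x‖ := by
    intro t
    induction t with
    | zero =>
      refine ⟨?_, h0⟩
      simpa using pow_le_pow_left₀ (norm_nonneg _) h0 2
    | succ t ih =>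
      obtain ⟨ihsq, ihball⟩ := ih
      have h1 : ‖z (t + 1) - x‖ ^ 2 ≤ r ^ (t + 1) * (ε * ‖x‖) ^ 2 := by
        calc ‖z (t + 1) - x‖ ^ 2 ≤ r * ‖z t - x‖ ^ 2 := key t ihball
          _ ≤ r * (r ^ t * (ε * ‖x‖) ^ 2) := by
              exact mul_le_mul_of_nonneg_left ihsq hr0
          _ = r ^ (t + 1) * (ε * ‖x‖) ^ 2 := by ring
      refine ⟨h1, ?_⟩
      have h2 : ‖z (t + 1) - x‖ ^ 2 ≤ (ε * ‖x‖) ^ 2 := by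
        have : r ^ (t + 1) ≤ 1 := pow_le_one₀ hr0 hr1.le
        nlinarith [sq_nonneg (ε * ‖x‖)]
      calc ‖z (t + 1) - x‖ = Real.sqrt (‖z (t + 1) - x‖ ^ 2) :=
            (Real.sqrt_sq (norm_nonneg _)).symm
        _ ≤ Real.sqrt ((ε * ‖x‖) ^ 2) := Real.sqrt_le_sqrt h2
        _ = ε * ‖x‖ := Real.sqrt_sq hC
  have hgeom : ∀ t : ℕ, ‖z t - x‖ ≤ r ^ ((t : ℝ) / 2) * (ε * ‖x‖) := by
    intro t
    have h1 := (hsq t).1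
    have h2 : Real.sqrt (r ^ t * (ε * ‖x‖) ^ 2)
        = r ^ ((t : ℝ) / 2) * (ε * ‖x‖) := by
      rw [Real.sqrt_mul (by positivity), Real.sqrt_sq hC,
        Real.sqrt_eq_rpow, ← Real.rpow_natCast r t, ← Real.rpow_mul hr0]
      rw [mul_one_div]
    calc ‖z t - x‖ = Real.sqrt (‖z t - x‖ ^ 2) :=
          (Real.sqrt_sq (norm_nonneg _)).symm
      _ ≤ Real.sqrt (r ^ t * (ε * ‖x‖) ^ 2) := Real.sqrt_le_sqrt h1
      _ = r ^ ((t : ℝ) / 2) * (ε * ‖x‖) := h2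
  refine ⟨hgeom, fun t => (hsq t).2, ?_⟩
  have hs0 : 0 ≤ Real.sqrt r := Real.sqrt_nonneg r
  have hs1 : Real.sqrt r < 1 := by
    rw [show (1:ℝ) = Real.sqrt 1 by simp]
    exact Real.sqrt_lt_sqrt hr0 hr1
  have htend : Tendsto (fun t : ℕ => (Real.sqrt r) ^ t * (ε * ‖x‖))
      atTop (nhds 0) := by
    simpa using
      (tendsto_pow_atTop_nhds_zero_of_lt_one hs0 hs1).mul_const (ε * ‖x‖)
  rw [tendsto_iff_dist_tendsto_zero]
  apply squeeze_zero (fun t => dist_nonneg) (fun t => ?_) htend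
  have : (Real.sqrt r) ^ t = r ^ ((t : ℝ) / 2) := by
    rw [Real.sqrt_eq_rpow, ← Real.rpow_natCast (r ^ (1/2:ℝ)) t,
      ← Real.rpow_mul hr0]
    ring_nf
  rw [dist_eq_norm, this]
  exact hgeom t
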